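/- Define Π(y) = ((−1)^{N/2}/(2y)) [ (y + i/2) ∏_{j=1}^{2N}(y − i s_j) + (y − i/2) ∏_{j=1}^{2N}(y + i s_j) ]. Then Π is a polynomial in x = y^2 of degree N with Π = (−1)^{N/2} [ x^N + Σ_{j=0}^{N−1} (−1)^j ((1/2) ς_{2j+1} − ς_{2j+2}) x^{N−j−1} ], where ς_k is the k-th elementary symmetric function of s_1, …, s_{2N} (ς_0 = 1). -/

import Mathlib

open Complex Finset

lemma expand_prod (n : ℕ) (s : Fin n → ℂ) (c y : ℂ) :
    ∏ j, (y + c * s j) =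
      ∑ k ∈ Finset.range (n+1),
        c ^ k * (∑ t ∈ Finset.powersetCard k (Finset.univ : Finset (Fin n)), ∏ i ∈ t, s i)
          * y ^ (n - k) := by
  simp only [add_comm y]
  rw [Finset.prod_add]
  rw [Finset.sum_powerset]
  rw [Finset.card_univ, Fintype.card_fin]
  refine Finset.sum_congr rfl fun k hk => ?_
  rw [Finset.mul_sum, Finset.sum_mul]
  refine Finset.sum_congr rfl fun t ht => ?_
  rw [Finset.mem_powersetCard] at ht
  rw [Finset.prod_const, Finset.card_sdiff_of_subset (Finset.subset_univ t),
    Finset.card_univ, Fintype.card_fin, ht.2, Finset.prod_mul_distrib,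
    Finset.prod_const, ht.2]

lemma sum_even_odd (n : ℕ) (f : ℕ → ℂ) :
    ∑ k ∈ Finset.range (2 * n + 1), f k =
      (∑ m ∈ Finset.range (n + 1), f (2 * m)) + ∑ m ∈ Finset.range n, f (2 * m + 1) := by
  induction n with
  | zero => simp
  | succ n ih =>
    have h : 2 * (n + 1) + 1 = (2 * n + 1) + 1 + 1 := by ring
    rw [h, Finset.sum_range_succ, Finset.sum_range_succ, ih]
    simp only [Finset.sum_range_succ, Nat.mul_succ]
    ring

theorem Pi_polynomial_in_x (N : ℕ) (hN : 0 < N) (hNe : Even N)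
    (s : Fin (2 * N) → ℂ) (y : ℂ) (hy : y ≠ 0) :
    let ς : ℕ → ℂ := fun l =>
      ∑ t ∈ Finset.powersetCard l (Finset.univ : Finset (Fin (2 * N))), ∏ i ∈ t, s i
    ((-1 : ℂ) ^ (N / 2) / (2 * y)) *
        ((y + Complex.I / 2) * ∏ j, (y - Complex.I * s j) +
          (y - Complex.I / 2) * ∏ j, (y + Complex.I * s j)) =
      (-1 : ℂ) ^ (N / 2) *
        ((y ^ 2) ^ N +
          ∑ j ∈ Finset.range N, (-1) ^ j *
            ((1 / 2 : ℂ) * ς (2 * j + 1) - ς (2 * j + 2)) * (y ^ 2) ^ (N - j - 1)) := by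
  intro ς
  have hς0 : ς 0 = 1 := by simp [ς]
  have hP1 : ∏ j, (y - Complex.I * s j)
      = ∑ k ∈ Finset.range (2 * N + 1), (-Complex.I) ^ k * ς k * y ^ (2 * N - k) := by
    have h := expand_prod (2 * N) s (-Complex.I) y
    simpa [sub_eq_add_neg, neg_mul, ς] using h
  have hP2 : ∏ j, (y + Complex.I * s j)
      = ∑ k ∈ Finset.range (2 * N + 1), Complex.I ^ k * ς k * y ^ (2 * N - k) :=
    expand_prod (2 * N) s Complex.I y
  have key : (y + Complex.I / 2) * ∏ j, (y - Complex.I * s j) +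
      (y - Complex.I / 2) * ∏ j, (y + Complex.I * s j)
      = 2 * y * ((y ^ 2) ^ N + ∑ j ∈ Finset.range N, (-1) ^ j *
          ((1 / 2 : ℂ) * ς (2 * j + 1) - ς (2 * j + 2)) * (y ^ 2) ^ (N - j - 1)) := by
    rw [hP1, hP2, Finset.mul_sum, Finset.mul_sum, ← Finset.sum_add_distrib,
      sum_even_odd, Finset.sum_range_succ']
    have h0 : (y + Complex.I / 2) * ((-Complex.I) ^ (2 * 0) * ς (2 * 0) * y ^ (2 * N - 2 * 0)) +
        (y - Complex.I / 2) * (Complex.I ^ (2 * 0) * ς (2 * 0) * y ^ (2 * N - 2 * 0))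
        = 2 * y * (y ^ 2) ^ N := by
      simp only [Nat.mul_zero, pow_zero, hς0, Nat.sub_zero, one_mul, mul_one]
      rw [← pow_mul]
      ring
    have hs : ∀ j ∈ Finset.range N,
        ((y + Complex.I / 2) * ((-Complex.I) ^ (2 * (j + 1)) * ς (2 * (j + 1)) * y ^ (2 * N - 2 * (j + 1))) +
          (y - Complex.I / 2) * (Complex.I ^ (2 * (j + 1)) * ς (2 * (j + 1)) * y ^ (2 * N - 2 * (j + 1)))) +
        ((y + Complex.I / 2) * ((-Complex.I) ^ (2 * j + 1) * ς (2 * j + 1) * y ^ (2 * N - (2 * j + 1))) +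
          (y - Complex.I / 2) * (Complex.I ^ (2 * j + 1) * ς (2 * j + 1) * y ^ (2 * N - (2 * j + 1))))
        = 2 * y * ((-1) ^ j * ((1 / 2 : ℂ) * ς (2 * j + 1) - ς (2 * j + 2)) * (y ^ 2) ^ (N - j - 1)) := by
      intro j hj
      rw [Finset.mem_range] at hj
      have e1 : 2 * N - 2 * (j + 1) = 2 * (N - j - 1) := by omega
      have e2 : 2 * N - (2 * j + 1) = 2 * (N - j - 1) + 1 := by omega
      have e3 : 2 * (j + 1) = 2 * j + 2 := by ring
      have hI1 : Complex.I ^ (2 * (j + 1)) = (-1 : ℂ) ^ (j + 1) := by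
        rw [pow_mul, Complex.I_sq]
      have hI2 : (-Complex.I) ^ (2 * (j + 1)) = (-1 : ℂ) ^ (j + 1) := by
        rw [pow_mul, neg_sq, Complex.I_sq]
      have hI3 : Complex.I ^ (2 * j + 1) = (-1 : ℂ) ^ j * Complex.I := by
        rw [pow_succ, pow_mul, Complex.I_sq]
      have hI4 : (-Complex.I) ^ (2 * j + 1) = -((-1 : ℂ) ^ j * Complex.I) := by
        rw [pow_succ, pow_mul, neg_sq, Complex.I_sq]; ring
      rw [e1, e2, hI1, hI2, hI3, hI4, e3]
      linear_combination (-(y * (-1 : ℂ) ^ j * ς (2 * j + 1) * (y ^ 2) ^ (N - j - 1))) * Complex.I_sq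
    rw [add_right_comm, ← Finset.sum_add_distrib, Finset.sum_congr rfl hs, h0,
      ← Finset.mul_sum]
    ring
  rw [key]
  field_simp
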